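/- Let q = p^r with p prime, 1 < s < q, and a ∈ 𝔽_q. Fix j ≥ 2 and 1 ≤ n ≤ q^{j-1}+1, and for m ≥ n define d_{j,m,n} = (-1)^{(j+m-n)(s-1)} · C([s^{j+m-n}]_q, c_{j,m,n}) · (-a)^{c_{j,m,n}} · (-1)^{n-1} ∈ 𝔽_q, where c_{j,m,n} = b_{j,m,n} - [s̄^{j+m-n}]_q with s̄ = q - s. Then d_{j,m+1,n} = (-1)^{s-1} (-a)^s · d_{j,m,n} for all m ≥ n, and consequently the sequence (d_{j,m,n})_{m ≥ n} is periodic. -/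

import Mathlib

/-- `[1^m 0^j]_q = ∑_{i<m} q^{j+i}`. -/
def onesZeros (q j m : ℕ) : ℕ := ∑ i ∈ Finset.range m, q ^ (j + i)

/-- `bSeq q j m t` is `b_{j,m,t+1}`, defined by `b_{j,m,1} = [1^m 0^j]_q`
and `b_{j,m,n+1} = b_{j,m,n} - (q^{j+m-n} - 1)`. -/
def bSeq (q j m : ℕ) : ℕ → ℕ
  | 0 => onesZeros q j m
  | t + 1 => bSeq q j m t - (q ^ (j + m - t - 1) - 1)

/-- `c_{j,m,n} = b_{j,m,n} - [s̄^{j+m-n}]_q` with `s̄ = q - s`. -/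
def cSeq (q j s m n : ℕ) : ℕ :=
  bSeq q j m (n - 1) - (q - s) * (q ^ (j + m - n) - 1) / (q - 1)

/-- `d_{j,m,n} = (-1)^{(j+m-n)(s-1)} C([s^{j+m-n}]_q, c_{j,m,n}) (-a)^{c_{j,m,n}} (-1)^{n-1} ∈ F`. -/
noncomputable def dSeq (F : Type) [Field F] (q j s : ℕ) (a : F) (m n : ℕ) : F :=
  (-1 : F) ^ ((j + m - n) * (s - 1)) *
    (Nat.choose (s * (q ^ (j + m - n) - 1) / (q - 1)) (cSeq q j s m n) : F) *
    (-a) ^ (cSeq q j s m n) * (-1 : F) ^ (n - 1)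

lemma geomS (q : ℕ) (hq : 1 ≤ q) (t : ℕ) :
    (q - 1) * (∑ i ∈ Finset.range t, q ^ i) = q ^ t - 1 := by
  induction t with
  | zero => simp
  | succ t ih =>
    rw [Finset.sum_range_succ, Nat.mul_add, ih]
    have h1 : 1 ≤ q ^ t := Nat.one_le_pow _ _ (by omega)
    have h2 : q ^ (t + 1) = q * q ^ t := by ring
    have h3 : (q - 1) * q ^ t = q * q ^ t - q ^ t := by rw [Nat.sub_mul, one_mul]
    have h4 : q ^ t ≤ q * q ^ t := Nat.le_mul_of_pos_left _ (by omega)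
    omega

lemma divS (q t k : ℕ) (hq : 2 ≤ q) :
    t * (q ^ k - 1) / (q - 1) = t * ∑ i ∈ Finset.range k, q ^ i := by
  rw [← geomS q (by omega) k, mul_left_comm, Nat.mul_div_cancel_left _ (by omega)]

lemma sum_split (q j u : ℕ) :
    ∑ i ∈ Finset.range (j + u), q ^ i =
      (∑ i ∈ Finset.range j, q ^ i) + ∑ i ∈ Finset.range u, q ^ (j + i) := by
  induction u with
  | zero => simp
  | succ u ih =>
    rw [show j + (u + 1) = (j + u) + 1 from rfl, Finset.sum_range_succ, ih,
      Finset.sum_range_succ, add_assoc]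

lemma bval (q j m : ℕ) (hq : 1 ≤ q) :
    ∀ t, t ≤ m → bSeq q j m t = (∑ i ∈ Finset.range (m - t), q ^ (j + i)) + t := by
  intro t
  induction t with
  | zero => intro _; simp [bSeq, onesZeros]
  | succ t ih =>
    intro h
    rw [bSeq, ih (by omega)]
    have hmt : m - t = (m - (t + 1)) + 1 := by omega
    rw [hmt, Finset.sum_range_succ, show j + (m - (t + 1)) = j + m - t - 1 from by omega]
    have h1 : 1 ≤ q ^ (j + m - t - 1) := Nat.one_le_pow _ _ (by omega)
    omega

lemma c_key (q j s m n : ℕ) (hq : 2 ≤ q) (hs2 : 2 ≤ s) (hsq : s < q)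
    (hn : 1 ≤ n) (hnm : n ≤ m) (hj : 1 ≤ j) :
    cSeq q j s m n + (∑ i ∈ Finset.range j, q ^ i) =
      n + s * ∑ i ∈ Finset.range (j + m - n), q ^ i := by
  unfold cSeq
  rw [divS q (q - s) (j + m - n) hq, bval q j m (by omega) (n - 1) (by omega)]
  have hm : m - (n - 1) = m - n + 1 := by omega
  have hks : j + (m - n + 1) = (j + m - n) + 1 := by omega
  rw [hm]
  have hX : (∑ i ∈ Finset.range j, q ^ i) + (∑ i ∈ Finset.range (m - n + 1), q ^ (j + i)) =
      (∑ i ∈ Finset.range (j + m - n), q ^ i) + q ^ (j + m - n) := by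
    rw [← sum_split, hks, Finset.sum_range_succ]
  set Sk := ∑ i ∈ Finset.range (j + m - n), q ^ i with hSk
  set Sj := ∑ i ∈ Finset.range j, q ^ i with hSj
  set X := ∑ i ∈ Finset.range (m - n + 1), q ^ (j + i) with hXd
  have hg : (q - 1) * Sk = q ^ (j + m - n) - 1 := geomS q (by omega) _
  have hP : 1 ≤ q ^ (j + m - n) := Nat.one_le_pow _ _ (by omega)
  have e1 : (q - 1) * Sk = q * Sk - Sk := by rw [Nat.sub_mul, one_mul]
  have e2 : (q - s) * Sk = q * Sk - s * Sk := by rw [Nat.sub_mul]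
  have le1 : Sk ≤ q * Sk := Nat.le_mul_of_pos_left _ (by omega)
  have le2 : s * Sk ≤ q * Sk := Nat.mul_le_mul (by omega) (le_refl _)
  have le3 : 2 * Sk ≤ s * Sk := Nat.mul_le_mul hs2 (le_refl _)
  have hSjk : Sj ≤ Sk := Finset.sum_le_sum_of_subset
    (Finset.range_subset_range.mpr (by omega))
  rw [e2]
  omega

lemma Sj_ge (q j : ℕ) (hq : 2 ≤ q) (hj : 2 ≤ j) :
    q ^ (j - 1) + 1 ≤ ∑ i ∈ Finset.range j, q ^ i := by
  have h1 : (1 : ℕ) ≤ ∑ i ∈ Finset.range (j - 1), q ^ i := by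
    calc (1 : ℕ) = ∑ i ∈ Finset.range 1, q ^ i := by simp
    _ ≤ _ := Finset.sum_le_sum_of_subset (Finset.range_subset_range.mpr (by omega))
  calc q ^ (j - 1) + 1 ≤ (∑ i ∈ Finset.range (j - 1), q ^ i) + q ^ (j - 1) := by omega
  _ = ∑ i ∈ Finset.range ((j - 1) + 1), q ^ i := (Finset.sum_range_succ _ _).symm
  _ = _ := by rw [show (j - 1) + 1 = j from by omega]

lemma c_succ (q j s m n : ℕ) (hq : 2 ≤ q) (hs2 : 2 ≤ s) (hsq : s < q)
    (hn : 1 ≤ n) (hnm : n ≤ m) (hj : 1 ≤ j) :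
    cSeq q j s (m + 1) n = cSeq q j s m n + s * q ^ (j + m - n) := by
  have h1 := c_key q j s m n hq hs2 hsq hn hnm hj
  have h2 := c_key q j s (m + 1) n hq hs2 hsq hn (by omega) hj
  rw [show j + (m + 1) - n = (j + m - n) + 1 from by omega, Finset.sum_range_succ,
    mul_add] at h2
  omega

lemma c_lt (q j s m n : ℕ) (hq : 2 ≤ q) (hs2 : 2 ≤ s) (hsq : s < q)
    (hn : 1 ≤ n) (hnm : n ≤ m) (hj : 2 ≤ j) (hn2 : n ≤ q ^ (j - 1) + 1) :
    cSeq q j s m n < q ^ (j + m - n) := by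
  have h1 := c_key q j s m n hq hs2 hsq hn hnm (by omega)
  have h2 := Sj_ge q j hq hj
  have hg : (q - 1) * (∑ i ∈ Finset.range (j + m - n), q ^ i) = q ^ (j + m - n) - 1 :=
    geomS q (by omega) _
  have hP : 1 ≤ q ^ (j + m - n) := Nat.one_le_pow _ _ (by omega)
  have le2 : s * (∑ i ∈ Finset.range (j + m - n), q ^ i) ≤
      (q - 1) * (∑ i ∈ Finset.range (j + m - n), q ^ i) :=
    Nat.mul_le_mul (by omega) (le_refl _)
  omega

lemma c_pos (q j s m n : ℕ) (hq : 2 ≤ q) (hs2 : 2 ≤ s) (hsq : s < q)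
    (hn : 1 ≤ n) (hnm : n ≤ m) (hj : 2 ≤ j) :
    1 ≤ cSeq q j s m n := by
  have h1 := c_key q j s m n hq hs2 hsq hn hnm (by omega)
  have le3 : 2 * (∑ i ∈ Finset.range (j + m - n), q ^ i) ≤
      s * (∑ i ∈ Finset.range (j + m - n), q ^ i) := Nat.mul_le_mul hs2 (le_refl _)
  have hSjk : (∑ i ∈ Finset.range j, q ^ i) ≤ ∑ i ∈ Finset.range (j + m - n), q ^ i :=
    Finset.sum_le_sum_of_subset (Finset.range_subset_range.mpr (by omega))
  omega

lemma lucas_pow (p : ℕ) (hp : p.Prime) :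
    ∀ e A B D : ℕ, B < p ^ e → D < p ^ e →
      Nat.choose (A * p ^ e + B) (A * p ^ e + D) ≡ Nat.choose B D [MOD p] := by
  haveI : Fact p.Prime := ⟨hp⟩
  intro e
  induction e with
  | zero =>
    intro A B D hB hD
    simp only [pow_zero, Nat.lt_one_iff] at hB hD
    subst hB; subst hD
    simp [Nat.choose_self]
    rfl
  | succ e ih =>
    intro A B D hB hD
    have hp0 : 0 < p := hp.pos
    have key := @Choose.choose_modEq_choose_mod_mul_choose_div_nat
      (A * p ^ (e + 1) + B) (A * p ^ (e + 1) + D) p _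
    have h1 : (A * p ^ (e + 1) + B) % p = B % p := by
      rw [pow_succ, ← mul_assoc, mul_comm (A * p ^ e) p, Nat.mul_add_mod]
    have h1' : (A * p ^ (e + 1) + D) % p = D % p := by
      rw [pow_succ, ← mul_assoc, mul_comm (A * p ^ e) p, Nat.mul_add_mod]
    have h2 : (A * p ^ (e + 1) + B) / p = A * p ^ e + B / p := by
      rw [pow_succ, ← mul_assoc, mul_comm (A * p ^ e) p, Nat.mul_add_div hp0]
    have h2' : (A * p ^ (e + 1) + D) / p = A * p ^ e + D / p := by
      rw [pow_succ, ← mul_assoc, mul_comm (A * p ^ e) p, Nat.mul_add_div hp0]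
    rw [h1, h1', h2, h2'] at key
    have hB' : B / p < p ^ e := Nat.div_lt_of_lt_mul (by rw [← pow_succ']; exact hB)
    have hD' : D / p < p ^ e := Nat.div_lt_of_lt_mul (by rw [← pow_succ']; exact hD)
    calc Nat.choose (A * p ^ (e + 1) + B) (A * p ^ (e + 1) + D)
        ≡ Nat.choose (B % p) (D % p) *
            Nat.choose (A * p ^ e + B / p) (A * p ^ e + D / p) [MOD p] := key
      _ ≡ Nat.choose (B % p) (D % p) * Nat.choose (B / p) (D / p) [MOD p] :=
          Nat.ModEq.mul_left _ (ih A (B / p) (D / p) hB' hD')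
      _ ≡ Nat.choose B D [MOD p] :=
          (Choose.choose_modEq_choose_mod_mul_choose_div_nat).symm

/-- over `F = 𝔽_q`, `q = p^r`, `1 < s < q`, `a ∈ F`, `j ≥ 2`,
`1 ≤ n ≤ q^{j-1}+1`: for all `m ≥ n`, `d_{j,m+1,n} = (-1)^{s-1}(-a)^s d_{j,m,n}`,
and consequently `(d_{j,m,n})_{m ≥ n}` is periodic. -/
theorem stmt16 (F : Type) [Field F] [Fintype F] (p r q : ℕ) (hp : p.Prime)
    (hr : 1 ≤ r) (hq : q = p ^ r) (hcard : Fintype.card F = q)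
    (s : ℕ) (hs1 : 1 < s) (hsq : s < q) (a : F) (j n : ℕ) (hj : 2 ≤ j)
    (hn1 : 1 ≤ n) (hn2 : n ≤ q ^ (j - 1) + 1) :
    (∀ m ≥ n, dSeq F q j s a (m + 1) n = (-1 : F) ^ (s - 1) * (-a) ^ s * dSeq F q j s a m n) ∧
      ∃ T, 1 ≤ T ∧ ∀ m ≥ n, dSeq F q j s a (m + T) n = dSeq F q j s a m n := by
  haveI : Fact p.Prime := ⟨hp⟩
  have hq2 : 2 ≤ q := by
    have h1 : p ≤ p ^ r := Nat.le_self_pow (by omega) p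
    have := hp.two_le; omega
  have hchar : CharP F p := by
    obtain ⟨n', hp', hc⟩ := FiniteField.card F (ringChar F)
    have hdvd : p ∣ (ringChar F) ^ (n' : ℕ) := by
      rw [← hc, hcard, hq]; exact dvd_pow_self p (by omega)
    have : p = ringChar F :=
      (Nat.prime_dvd_prime_iff_eq hp hp').mp (hp.dvd_of_dvd_pow hdvd)
    rw [this]; exact ringChar.charP F
  have part1 : ∀ m ≥ n, dSeq F q j s a (m + 1) n =
      (-1 : F) ^ (s - 1) * (-a) ^ s * dSeq F q j s a m n := by
    intro m hm
    set k := j + m - n with hk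
    have hk1 : j + (m + 1) - n = k + 1 := by omega
    unfold dSeq
    rw [hk1]
    have hc' : cSeq q j s (m + 1) n = cSeq q j s m n + s * q ^ k :=
      c_succ q j s m n hq2 (by omega) hsq hn1 hm (by omega)
    have hchoose : ((Nat.choose (s * (q ^ (k + 1) - 1) / (q - 1))
        (cSeq q j s m n + s * q ^ k) : ℕ) : F) =
        ((Nat.choose (s * (q ^ k - 1) / (q - 1)) (cSeq q j s m n) : ℕ) : F) := by
      rw [divS q s (k + 1) hq2, divS q s k hq2]
      have hsplit : s * (∑ i ∈ Finset.range (k + 1), q ^ i) =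
          s * q ^ k + s * (∑ i ∈ Finset.range k, q ^ i) := by
        rw [Finset.sum_range_succ, mul_add]; ring
      rw [hsplit]
      have hqk : q ^ k = p ^ (r * k) := by rw [hq, ← pow_mul]
      have hB : s * (∑ i ∈ Finset.range k, q ^ i) < q ^ k := by
        have hg : (q - 1) * (∑ i ∈ Finset.range k, q ^ i) = q ^ k - 1 :=
          geomS q (by omega) _
        have hP : 1 ≤ q ^ k := Nat.one_le_pow _ _ (by omega)
        have le2 : s * (∑ i ∈ Finset.range k, q ^ i) ≤
            (q - 1) * (∑ i ∈ Finset.range k, q ^ i) :=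
          Nat.mul_le_mul (by omega) (le_refl _)
        omega
      have hD : cSeq q j s m n < q ^ k :=
        c_lt q j s m n hq2 (by omega) hsq hn1 hm hj hn2
      have hmod : Nat.choose (s * p ^ (r * k) + s * (∑ i ∈ Finset.range k, q ^ i))
          (s * p ^ (r * k) + cSeq q j s m n) ≡
          Nat.choose (s * (∑ i ∈ Finset.range k, q ^ i)) (cSeq q j s m n) [MOD p] :=
        lucas_pow p hp (r * k) s _ _ (hqk ▸ hB) (hqk ▸ hD)
      rw [hqk] at *
      rw [add_comm (cSeq q j s m n) (s * p ^ (r * k))]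
      exact (CharP.natCast_eq_natCast F p).mpr hmod
    have hpow : (-a) ^ (cSeq q j s m n + s * q ^ k) =
        (-a) ^ (cSeq q j s m n) * ((-a) ^ s) := by
      rw [pow_add, pow_mul, show q ^ k = Fintype.card F ^ k from by rw [hcard],
        FiniteField.pow_card_pow]
    have hsign : (-1 : F) ^ ((k + 1) * (s - 1)) =
        (-1 : F) ^ (s - 1) * (-1 : F) ^ (k * (s - 1)) := by
      rw [← pow_add]
      congr 1
      ring
    rw [hc', hchoose, hpow, hsign]
    ring
  refine ⟨part1, ?_⟩
  set α := (-1 : F) ^ (s - 1) * (-a) ^ s with hα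
  have hiter : ∀ T m, n ≤ m → dSeq F q j s a (m + T) n = α ^ T * dSeq F q j s a m n := by
    intro T
    induction T with
    | zero => intro m hm; simp
    | succ T ih =>
      intro m hm
      rw [show m + (T + 1) = (m + T) + 1 from rfl, part1 (m + T) (by omega), ih m hm,
        pow_succ]
      ring
  refine ⟨q - 1, by omega, fun m hm => ?_⟩
  rw [hiter (q - 1) m hm]
  by_cases ha : α = 0
  · have ha0 : a = 0 := by
      have h1 : (-1 : F) ^ (s - 1) ≠ 0 := pow_ne_zero _ (by simp)
      have h2 : (-a) ^ s = 0 := by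
        rcases mul_eq_zero.mp ha with h | h
        · exact absurd h h1
        · exact h
      have h3 : (-a) = 0 := pow_eq_zero_iff (by omega) |>.mp h2
      exact neg_eq_zero.mp h3
    have hd0 : dSeq F q j s a m n = 0 := by
      unfold dSeq
      rw [ha0, neg_zero, zero_pow (by
        have := c_pos q j s m n hq2 (by omega) hsq hn1 hm hj
        omega)]
      ring
    rw [hd0, mul_zero]
  · rw [show q - 1 = Fintype.card F - 1 from by rw [hcard],
      FiniteField.pow_card_sub_one_eq_one α ha, one_mul]
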